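/- The two Hamiltonians H₁ = 2p₁p₂ + q₁p₂² − q₁⁴ + 3q₁²q₂ − q₂² + 3t₂(q₂−q₁²) + (t₁+c)q₁ and H₂ = p₁² + 2q₁p₁p₂ + (q₁²−q₂)p₂² + p₂ − q₁³q₂ + 2q₁q₂² − 3t₂q₁q₂ + (t₁+c)q₂ satisfy the Frobenius integrability condition {H₁,H₂} + ∂H₁/∂t₂ − ∂H₂/∂t₁ = 3t₂, where {·,·} is the canonical Poisson bracket in (q₁,q₂,p₁,p₂). -/

import Mathlib

/-- Partial derivatives of a function of (q₁,q₂,p₁,p₂,t₁,t₂). -/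
noncomputable def dq1 (F : ℝ → ℝ → ℝ → ℝ → ℝ → ℝ → ℝ) (a b u v s t : ℝ) : ℝ :=
  deriv (fun x => F x b u v s t) a
noncomputable def dq2 (F : ℝ → ℝ → ℝ → ℝ → ℝ → ℝ → ℝ) (a b u v s t : ℝ) : ℝ :=
  deriv (fun x => F a x u v s t) b
noncomputable def dp1 (F : ℝ → ℝ → ℝ → ℝ → ℝ → ℝ → ℝ) (a b u v s t : ℝ) : ℝ :=
  deriv (fun x => F a b x v s t) u
noncomputable def dp2 (F : ℝ → ℝ → ℝ → ℝ → ℝ → ℝ → ℝ) (a b u v s t : ℝ) : ℝ :=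
  deriv (fun x => F a b u x s t) v
noncomputable def dt1 (F : ℝ → ℝ → ℝ → ℝ → ℝ → ℝ → ℝ) (a b u v s t : ℝ) : ℝ :=
  deriv (fun x => F a b u v x t) s
noncomputable def dt2 (F : ℝ → ℝ → ℝ → ℝ → ℝ → ℝ → ℝ) (a b u v s t : ℝ) : ℝ :=
  deriv (fun x => F a b u v s x) t

/-- Canonical Poisson bracket in (q₁,q₂,p₁,p₂). -/
noncomputable def pbracket (F G : ℝ → ℝ → ℝ → ℝ → ℝ → ℝ → ℝ) (a b u v s t : ℝ) : ℝ :=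
    dq1 F a b u v s t * dp1 G a b u v s t - dp1 F a b u v s t * dq1 G a b u v s t
  + dq2 F a b u v s t * dp2 G a b u v s t - dp2 F a b u v s t * dq2 G a b u v s t

set_option maxHeartbeats 4000000 in
theorem stmt3 (c : ℝ)
    (H1 H2 : ℝ → ℝ → ℝ → ℝ → ℝ → ℝ → ℝ)
    (hH1 : H1 = fun q1 q2 p1 p2 t1 t2 =>
      2*p1*p2 + q1*p2^2 - q1^4 + 3*q1^2*q2 - q2^2 + 3*t2*(q2 - q1^2) + (t1 + c)*q1)
    (hH2 : H2 = fun q1 q2 p1 p2 t1 t2 =>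
      p1^2 + 2*q1*p1*p2 + (q1^2 - q2)*p2^2 + p2 - q1^3*q2 + 2*q1*q2^2 - 3*t2*q1*q2 + (t1 + c)*q2) :
    ∀ q1 q2 p1 p2 t1 t2 : ℝ,
      pbracket H1 H2 q1 q2 p1 p2 t1 t2
        + dt2 H1 q1 q2 p1 p2 t1 t2 - dt1 H2 q1 q2 p1 p2 t1 t2 = 3*t2 := by
  intro q1 q2 p1 p2 t1 t2
  subst hH1 hH2
  simp only [pbracket, dq1, dq2, dp1, dp2, dt1, dt2]
  simp (disch := fun_prop) [deriv_add, deriv_sub, deriv_mul, deriv_pow, deriv_const_mul,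
    deriv_const_mul_field', deriv_id'']
  ring
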